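/- For every natural number n and complex number a with (2a-3)_k ≠ 0 for 0 ≤ k ≤ 2n and a-1 ≠ 0, ∑_{k=0}^{2n} (-2n)_k (a)_k 2^k / ((2a-3)_k k!) = ((1/2)_n / (a-3/2)_n) · (1 + 4n/(a-1)). -/
import Mathlib
open Finset

noncomputable def poch (x : ℂ) (k : ℕ) : ℂ := (ascPochhammer ℂ k).eval x

lemma poch_zero (x : ℂ) : poch x 0 = 1 := by simp [poch]

lemma poch_succ (x : ℂ) (k : ℕ) : poch x (k + 1) = poch x k * (x + k) := by
  simp [poch, ascPochhammer_succ_right]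

lemma poch_shift (y : ℂ) (k : ℕ) :
    poch y k * (y + k) * (y + k + 1) = y * (y + 1) * poch (y + 2) k := by
  induction k with
  | zero => simp [poch_zero]
  | succ k ih =>
      rw [poch_succ, poch_succ]
      push_cast
      linear_combination (y + k + 2) * ih

lemma poch_nat_neg (m k : ℕ) (h : m < k) : poch (-(m : ℂ)) k = 0 := by
  induction k with
  | zero => omega
  | succ k ih =>
      rw [poch_succ]
      rcases Nat.lt_or_ge m k with h' | h'
      · rw [ih h', zero_mul]
      · have : m = k := by omega
        subst this
        simp

lemma poch_ne_zero (x : ℂ) (k : ℕ) (h : ∀ j < k, x + j ≠ 0) : poch x k ≠ 0 := by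
  induction k with
  | zero => simp [poch_zero]
  | succ k ih =>
      rw [poch_succ]
      exact mul_ne_zero (ih fun j hj => h j (by omega)) (h k (by omega))

noncomputable def rhoF (a x t : ℂ) : ℂ :=
  (x + 1) * (2 * x + 1) *
    ((-108 + 78 * a - 12 * a ^ 2 - 64 * x + 48 * x * a - 8 * x * a ^ 2) * t
      + (67 - 26 * a + 32 * x - 12 * x * a) * t ^ 2 + (-14 + 2 * a - 4 * x) * t ^ 3 + t ^ 4)

noncomputable def GF (a x : ℂ) (k : ℕ) : ℂ :=
  rhoF a x k * poch (-(2 * (x + 2))) k * poch a k * 2 ^ k /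
    ((2 * x + 1) * (2 * x + 2) * (2 * x + 3) * (2 * x + 4) * poch (2 * a - 3) k *
      (k.factorial : ℂ))

lemma frac_congr {u v N D : ℂ} (hv : v ≠ 0) (hD : D ≠ 0) (h : u * D = N * v) :
    u / v = N / D := by
  rw [div_eq_div_iff hv hD]; exact h

set_option maxHeartbeats 2000000 in
lemma perk (a x : ℂ) (k : ℕ) (hC : poch (2 * a - 3) k ≠ 0) (hck : 2 * a - 3 + k ≠ 0)
    (h1 : 2 * x + 1 ≠ 0) (h2 : 2 * x + 2 ≠ 0) (h3 : 2 * x + 3 ≠ 0) (h4 : 2 * x + 4 ≠ 0) :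
    (2 * x + 1) * (x + 1) *
        (poch (-(2 * x)) k * poch a k * 2 ^ k / (poch (2 * a - 3) k * (k.factorial : ℂ)))
      - (4 * x ^ 2 + 2 * x + 4 * x * a + 5 * a + 1) *
        (poch (-(2 * (x + 1))) k * poch a k * 2 ^ k / (poch (2 * a - 3) k * (k.factorial : ℂ)))
      + (2 * a ^ 2 + 4 * x * a + 2 * x ^ 2 - a - x) *
        (poch (-(2 * (x + 2))) k * poch a k * 2 ^ k / (poch (2 * a - 3) k * (k.factorial : ℂ)))
      = GF a x (k + 1) - GF a x k := by
  have r1 := poch_shift (-(2 * (x + 2))) k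
  rw [show -(2 * (x + 2)) + 2 = -(2 * (x + 1)) by ring] at r1
  have r2 := poch_shift (-(2 * (x + 1))) k
  rw [show -(2 * (x + 1)) + 2 = -(2 * x) by ring] at r2
  have hf : (k.factorial : ℂ) ≠ 0 := Nat.cast_ne_zero.mpr k.factorial_ne_zero
  have hk1 : ((k : ℂ) + 1) ≠ 0 := by
    have : ((k + 1 : ℕ) : ℂ) ≠ 0 := Nat.cast_ne_zero.mpr (by omega)
    push_cast at this; exact this
  have hDall : (2 * x + 1) * (2 * x + 2) * (2 * x + 3) * (2 * x + 4) * poch (2 * a - 3) k *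
      (2 * a - 3 + (k : ℂ)) * ((k : ℂ) + 1) * (k.factorial : ℂ) ≠ 0 := by
    apply_rules [mul_ne_zero]
  have hT0 : poch (-(2 * x)) k * poch a k * 2 ^ k / (poch (2 * a - 3) k * (k.factorial : ℂ))
      = poch (-(2 * x)) k * poch a k * 2 ^ k * ((2 * x + 1) * (2 * x + 2) * (2 * x + 3) *
          (2 * x + 4) * (2 * a - 3 + (k : ℂ)) * ((k : ℂ) + 1)) /
        ((2 * x + 1) * (2 * x + 2) * (2 * x + 3) * (2 * x + 4) * poch (2 * a - 3) k *
          (2 * a - 3 + (k : ℂ)) * ((k : ℂ) + 1) * (k.factorial : ℂ)) := by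
    apply frac_congr (mul_ne_zero hC hf) hDall; ring
  have hT1 : poch (-(2 * (x + 1))) k * poch a k * 2 ^ k /
        (poch (2 * a - 3) k * (k.factorial : ℂ))
      = poch (-(2 * (x + 1))) k * poch a k * 2 ^ k * ((2 * x + 1) * (2 * x + 2) * (2 * x + 3) *
          (2 * x + 4) * (2 * a - 3 + (k : ℂ)) * ((k : ℂ) + 1)) /
        ((2 * x + 1) * (2 * x + 2) * (2 * x + 3) * (2 * x + 4) * poch (2 * a - 3) k *
          (2 * a - 3 + (k : ℂ)) * ((k : ℂ) + 1) * (k.factorial : ℂ)) := by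
    apply frac_congr (mul_ne_zero hC hf) hDall; ring
  have hT2 : poch (-(2 * (x + 2))) k * poch a k * 2 ^ k /
        (poch (2 * a - 3) k * (k.factorial : ℂ))
      = poch (-(2 * (x + 2))) k * poch a k * 2 ^ k * ((2 * x + 1) * (2 * x + 2) * (2 * x + 3) *
          (2 * x + 4) * (2 * a - 3 + (k : ℂ)) * ((k : ℂ) + 1)) /
        ((2 * x + 1) * (2 * x + 2) * (2 * x + 3) * (2 * x + 4) * poch (2 * a - 3) k *
          (2 * a - 3 + (k : ℂ)) * ((k : ℂ) + 1) * (k.factorial : ℂ)) := by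
    apply frac_congr (mul_ne_zero hC hf) hDall; ring
  have hG1 : GF a x (k + 1)
      = 2 * rhoF a x ((k : ℂ) + 1) * poch (-(2 * (x + 2))) k * ((k : ℂ) - 2 * x - 4) *
          poch a k * (a + (k : ℂ)) * 2 ^ k /
        ((2 * x + 1) * (2 * x + 2) * (2 * x + 3) * (2 * x + 4) * poch (2 * a - 3) k *
          (2 * a - 3 + (k : ℂ)) * ((k : ℂ) + 1) * (k.factorial : ℂ)) := by
    rw [GF, poch_succ (2 * a - 3), poch_succ a, poch_succ (-(2 * (x + 2))),
      Nat.factorial_succ, pow_succ]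
    push_cast
    apply frac_congr ?_ hDall ?_
    · apply_rules [mul_ne_zero]
    · ring
  have hG0 : GF a x k
      = rhoF a x (k : ℂ) * poch (-(2 * (x + 2))) k * poch a k * 2 ^ k *
          ((2 * a - 3 + (k : ℂ)) * ((k : ℂ) + 1)) /
        ((2 * x + 1) * (2 * x + 2) * (2 * x + 3) * (2 * x + 4) * poch (2 * a - 3) k *
          (2 * a - 3 + (k : ℂ)) * ((k : ℂ) + 1) * (k.factorial : ℂ)) := by
    rw [GF]
    apply frac_congr ?_ hDall ?_
    · apply_rules [mul_ne_zero]
    · ring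
  rw [hT0, hT1, hT2, hG1, hG0, mul_div_assoc', mul_div_assoc', mul_div_assoc',
    ← sub_div, ← add_div, ← sub_div]
  congr 1
  simp only [rhoF]
  linear_combination
    (poch a k * (2:ℂ) ^ k) *
      (((2 * a - 3 + (k : ℂ)) * ((k : ℂ) + 1) *
          ((2 * x + 1) * (2 * x + 2) * (4 * x ^ 2 + 2 * x + 4 * x * a + 5 * a + 1)
            - (2 * x + 1) * (x + 1) * ((k : ℂ) - 2 * x - 2) * ((k : ℂ) - 2 * x - 1))) * r1
        + (-((2 * x + 3) * (2 * x + 4) * (2 * a - 3 + (k : ℂ)) * ((k : ℂ) + 1) *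
            ((2 * x + 1) * (x + 1)))) * r2)

lemma poch_neg_two (j k : ℕ) (h : 2 * j < k) : poch (-(2 * (j : ℂ))) k = 0 := by
  have h2 := poch_nat_neg (2 * j) k h
  rwa [show ((2 * j : ℕ) : ℂ) = 2 * (j : ℂ) by push_cast; ring] at h2

lemma poch_one (y : ℂ) : poch y 1 = y := by simpa [poch_zero] using poch_succ y 0

lemma poch_two (y : ℂ) : poch y 2 = y * (y + 1) := by
  have h := poch_succ y 1
  rw [poch_one] at h
  push_cast at h
  simpa using h

lemma Rrec (a x Q D : ℂ) (ha : a - 1 ≠ 0) (hD : D ≠ 0) (hd1 : a - 3 / 2 + x ≠ 0)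
    (hd2 : a - 3 / 2 + (x + 1) ≠ 0) :
    (2 * a ^ 2 + 4 * x * a + 2 * x ^ 2 - a - x) *
        (Q * (1 / 2 + x) * (1 / 2 + (x + 1)) / (D * (a - 3 / 2 + x) * (a - 3 / 2 + (x + 1))) *
          (1 + 4 * (x + 2) / (a - 1)))
      = (4 * x ^ 2 + 2 * x + 4 * x * a + 5 * a + 1) *
          (Q * (1 / 2 + x) / (D * (a - 3 / 2 + x)) * (1 + 4 * (x + 1) / (a - 1)))
        - (2 * x + 1) * (x + 1) * (Q / D * (1 + 4 * x / (a - 1))) := by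
  have hone : ∀ w : ℂ, (1 : ℂ) + w / (a - 1) = (a - 1 + w) / (a - 1) := by
    intro w
    rw [eq_div_iff ha, add_mul, div_mul_cancel₀ _ ha]
    ring
  rw [hone, hone, hone, div_mul_div_comm, div_mul_div_comm, div_mul_div_comm,
    mul_div_assoc', mul_div_assoc', mul_div_assoc',
    div_sub_div _ _ (show D * (a - 3 / 2 + x) * (a - 1) ≠ 0 by apply_rules [mul_ne_zero])
      (show D * (a - 1) ≠ 0 by apply_rules [mul_ne_zero]),
    div_eq_div_iff
      (show D * (a - 3 / 2 + x) * (a - 3 / 2 + (x + 1)) * (a - 1) ≠ 0 by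
        apply_rules [mul_ne_zero])
      (show D * (a - 3 / 2 + x) * (a - 1) * (D * (a - 1)) ≠ 0 by apply_rules [mul_ne_zero])]
  ring

set_option maxHeartbeats 2000000 in
theorem twoF1_aux (a : ℂ) (ha : a - 1 ≠ 0) : ∀ n : ℕ,
    (∀ k ≤ 2 * n, poch (2 * a - 3) k ≠ 0) →
    ∑ k ∈ range (2 * n + 1),
        poch (-(2 * (n : ℂ))) k * poch a k * 2 ^ k / (poch (2 * a - 3) k * (k.factorial : ℂ))
      = poch (1 / 2) n / poch (a - 3 / 2) n * (1 + 4 * (n : ℂ) / (a - 1)) := by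
  intro n
  induction n using Nat.strong_induction_on with
  | _ n ih =>
    rcases n with _ | n
    · intro _
      norm_num [Finset.sum_range_succ, poch_zero]
    rcases n with _ | m
    · -- n = 1
      intro h
      have h1 := h 1 (by omega)
      rw [poch_one] at h1
      have h32 : a - 3 / 2 ≠ 0 := fun hz => h1 (by linear_combination 2 * hz)
      have h22 : 2 * a - 2 ≠ 0 := fun hz => ha (by linear_combination hz / 2)
      rw [show 2 * (0 + 1) + 1 = 3 from rfl, Finset.sum_range_succ, Finset.sum_range_succ,
        Finset.sum_range_succ, Finset.sum_range_zero]
      rw [poch_two, poch_two, poch_two, poch_one, poch_one, poch_one, poch_one, poch_one,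
        poch_zero, poch_zero, poch_zero]
      norm_num [Nat.factorial]
      have h22' : 2 * a - 3 + 1 ≠ 0 := by intro hz; exact h22 (by linear_combination hz)
      have hd2 : (2 * a - 3) * (2 * a - 3 + 1) * 2 ≠ 0 := by
        apply_rules [mul_ne_zero, two_ne_zero]
      have hA3 : (1 : ℂ) + 4 / (a - 1) = (a + 3) / (a - 1) := by
        rw [eq_div_iff ha, add_mul, div_mul_cancel₀ _ ha]; ring
      rw [hA3, add_div' _ _ _ h1, div_add_div _ _ h1 hd2, div_mul_div_comm,
        div_eq_div_iff (mul_ne_zero h1 hd2) (mul_ne_zero h32 ha)]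
      ring
    · -- n = m + 2
      intro h
      have hfac : ∀ j : ℕ, j ≤ 2 * m + 3 → 2 * a - 3 + (j : ℂ) ≠ 0 := by
        intro j hj hz
        have hp := h (j + 1) (by omega)
        rw [poch_succ] at hp
        exact hp (by rw [hz, mul_zero])
      have h1 : 2 * (m : ℂ) + 1 ≠ 0 := by
        have : ((2 * m + 1 : ℕ) : ℂ) ≠ 0 := Nat.cast_ne_zero.mpr (by omega)
        push_cast at this; exact this
      have h2 : 2 * (m : ℂ) + 2 ≠ 0 := by
        have : ((2 * m + 2 : ℕ) : ℂ) ≠ 0 := Nat.cast_ne_zero.mpr (by omega)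
        push_cast at this; exact this
      have h3 : 2 * (m : ℂ) + 3 ≠ 0 := by
        have : ((2 * m + 3 : ℕ) : ℂ) ≠ 0 := Nat.cast_ne_zero.mpr (by omega)
        push_cast at this; exact this
      have h4 : 2 * (m : ℂ) + 4 ≠ 0 := by
        have : ((2 * m + 4 : ℕ) : ℂ) ≠ 0 := Nat.cast_ne_zero.mpr (by omega)
        push_cast at this; exact this
      have hper : ∑ k ∈ range (2 * m + 4),
          ((2 * (m:ℂ) + 1) * ((m:ℂ) + 1) *
              (poch (-(2 * (m:ℂ))) k * poch a k * 2 ^ k /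
                (poch (2 * a - 3) k * (k.factorial : ℂ)))
            - (4 * (m:ℂ) ^ 2 + 2 * (m:ℂ) + 4 * (m:ℂ) * a + 5 * a + 1) *
              (poch (-(2 * ((m:ℂ) + 1))) k * poch a k * 2 ^ k /
                (poch (2 * a - 3) k * (k.factorial : ℂ)))
            + (2 * a ^ 2 + 4 * (m:ℂ) * a + 2 * (m:ℂ) ^ 2 - a - (m:ℂ)) *
              (poch (-(2 * ((m:ℂ) + 2))) k * poch a k * 2 ^ k /
                (poch (2 * a - 3) k * (k.factorial : ℂ))))
          = GF a (m:ℂ) (2 * m + 4) - GF a (m:ℂ) 0 := by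
        rw [← Finset.sum_range_sub (GF a (m:ℂ)) (2 * m + 4)]
        apply Finset.sum_congr rfl
        intro k hk
        rw [Finset.mem_range] at hk
        exact perk a (m:ℂ) k (h k (by omega)) (hfac k (by omega)) h1 h2 h3 h4
      rw [Finset.sum_add_distrib, Finset.sum_sub_distrib, ← Finset.mul_sum, ← Finset.mul_sum,
        ← Finset.mul_sum] at hper
      have ext0 : ∑ k ∈ range (2 * m + 1),
            poch (-(2 * (m:ℂ))) k * poch a k * 2 ^ k /
              (poch (2 * a - 3) k * (k.factorial : ℂ))
          = ∑ k ∈ range (2 * m + 4),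
            poch (-(2 * (m:ℂ))) k * poch a k * 2 ^ k /
              (poch (2 * a - 3) k * (k.factorial : ℂ)) := by
        apply Finset.sum_subset (Finset.range_subset_range.mpr (by omega))
        intro k hk hnk
        rw [Finset.mem_range] at hk hnk
        rw [poch_neg_two m k (by omega), zero_mul, zero_mul, zero_div]
      have ext1 : ∑ k ∈ range (2 * m + 3),
            poch (-(2 * ((m:ℂ) + 1))) k * poch a k * 2 ^ k /
              (poch (2 * a - 3) k * (k.factorial : ℂ))
          = ∑ k ∈ range (2 * m + 4),
            poch (-(2 * ((m:ℂ) + 1))) k * poch a k * 2 ^ k /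
              (poch (2 * a - 3) k * (k.factorial : ℂ)) := by
        apply Finset.sum_subset (Finset.range_subset_range.mpr (by omega))
        intro k hk hnk
        rw [Finset.mem_range] at hk hnk
        have hz : poch (-(2 * ((m:ℂ) + 1))) k = 0 := by
          rw [show -(2 * ((m:ℂ) + 1)) = -(2 * (((m + 1 : ℕ)) : ℂ)) by push_cast; ring]
          exact poch_neg_two (m + 1) k (by omega)
        rw [hz, zero_mul, zero_mul, zero_div]
      have ext2 : ∑ k ∈ range (2 * m + 4),
            poch (-(2 * ((m:ℂ) + 2))) k * poch a k * 2 ^ k /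
              (poch (2 * a - 3) k * (k.factorial : ℂ))
          = (∑ k ∈ range (2 * m + 4 + 1),
            poch (-(2 * ((m:ℂ) + 2))) k * poch a k * 2 ^ k /
              (poch (2 * a - 3) k * (k.factorial : ℂ)))
            - poch (-(2 * ((m:ℂ) + 2))) (2 * m + 4) * poch a (2 * m + 4) * 2 ^ (2 * m + 4) /
              (poch (2 * a - 3) (2 * m + 4) * ((2 * m + 4).factorial : ℂ)) :=
        eq_sub_of_add_eq (Finset.sum_range_succ _ (2 * m + 4)).symm
      have hG0 : GF a (m:ℂ) 0 = 0 := by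
        norm_num [GF, rhoF]
      have hC24 : poch (2 * a - 3) (2 * m + 4) ≠ 0 := h (2 * m + 4) (by omega)
      have hf24 : (((2 * m + 4).factorial : ℕ) : ℂ) ≠ 0 :=
        Nat.cast_ne_zero.mpr (Nat.factorial_ne_zero _)
      have hb : GF a (m:ℂ) (2 * m + 4)
          = -((2 * a ^ 2 + 4 * (m:ℂ) * a + 2 * (m:ℂ) ^ 2 - a - (m:ℂ)) *
              (poch (-(2 * ((m:ℂ) + 2))) (2 * m + 4) * poch a (2 * m + 4) * 2 ^ (2 * m + 4) /
                (poch (2 * a - 3) (2 * m + 4) * ((2 * m + 4).factorial : ℂ)))) := by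
        rw [GF, show (((2 * m + 4 : ℕ)) : ℂ) = 2 * (m:ℂ) + 4 by push_cast; ring,
          mul_div_assoc', ← neg_div, ← neg_mul]
        apply frac_congr ?_ (mul_ne_zero hC24 hf24) ?_
        · exact mul_ne_zero (mul_ne_zero (mul_ne_zero (mul_ne_zero (mul_ne_zero h1 h2) h3) h4)
            hC24) hf24
        · rw [rhoF]; ring
      rw [ext2, hG0, hb, ← ext0, ← ext1] at hper
      have ihm := ih m (by omega) (fun k hk => h k (by omega))
      have ihm1 := ih (m + 1) (by omega) (fun k hk => h k (by omega))
      rw [show 2 * (m + 1) + 1 = 2 * m + 3 by ring] at ihm1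
      have hcast1 : ((m + 1 : ℕ) : ℂ) = (m : ℂ) + 1 := by push_cast; ring
      rw [hcast1] at ihm1
      rw [ihm, ihm1] at hper
      have haP : a + (m:ℂ) ≠ 0 := by
        intro hz
        exact hfac (2 * m + 3) (by omega) (by push_cast; linear_combination 2 * hz)
      have hbP : 2 * a + 2 * (m:ℂ) - 1 ≠ 0 := by
        intro hz
        exact hfac (2 * m + 2) (by omega) (by push_cast; linear_combination hz)
      have hP2 : 2 * a ^ 2 + 4 * (m:ℂ) * a + 2 * (m:ℂ) ^ 2 - a - (m:ℂ) ≠ 0 := by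
        intro hz
        rcases mul_eq_zero.mp (show (a + (m:ℂ)) * (2 * a + 2 * (m:ℂ) - 1) = 0 by
          linear_combination hz) with h' | h'
        · exact haP h'
        · exact hbP h'
      have hDpoch : ∀ j : ℕ, j ≤ m + 1 → a - 3 / 2 + (j : ℂ) ≠ 0 := by
        intro j hj hz
        exact hfac (2 * j) (by omega) (by push_cast; linear_combination 2 * hz)
      have hD : poch (a - 3 / 2) m ≠ 0 :=
        poch_ne_zero _ _ (fun j hj => hDpoch j (by omega))
      have hd1 : a - 3 / 2 + (m:ℂ) ≠ 0 := hDpoch m (by omega)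
      have hd2 : a - 3 / 2 + ((m:ℂ) + 1) ≠ 0 := by
        have h5 := hDpoch (m + 1) (by omega)
        rwa [hcast1] at h5
      have pe3 : poch (1 / 2 : ℂ) (m + 1) = poch (1 / 2 : ℂ) m * (1 / 2 + (m:ℂ)) := by
        rw [poch_succ]
      have pe4 : poch (a - 3 / 2) (m + 1) = poch (a - 3 / 2) m * (a - 3 / 2 + (m:ℂ)) := by
        rw [poch_succ]
      rw [pe3, pe4] at hper
      have hrec := Rrec a (m:ℂ) (poch (1 / 2 : ℂ) m) (poch (a - 3 / 2) m) ha hD hd1 hd2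
      -- final assembly
      rw [show (m + 1 + 1 : ℕ) = m + 2 from rfl, show 2 * (m + 2) + 1 = 2 * m + 4 + 1 by omega,
        show ((m + 2 : ℕ) : ℂ) = (m : ℂ) + 2 by push_cast; ring]
      have pe1 : poch (1 / 2 : ℂ) (m + 2)
          = poch (1 / 2 : ℂ) m * (1 / 2 + (m:ℂ)) * (1 / 2 + ((m:ℂ) + 1)) := by
        rw [show (m + 2 : ℕ) = (m + 1) + 1 from rfl, poch_succ, poch_succ, hcast1]
      have pe2 : poch (a - 3 / 2) (m + 2)
          = poch (a - 3 / 2) m * (a - 3 / 2 + (m:ℂ)) * (a - 3 / 2 + ((m:ℂ) + 1)) := by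
        rw [show (m + 2 : ℕ) = (m + 1) + 1 from rfl, poch_succ, poch_succ, hcast1]
      rw [pe1, pe2]
      apply mul_left_cancel₀ hP2
      linear_combination hper - hrec


theorem twoF1_neg2n_a_twoAm3 (n : ℕ) (a : ℂ) (h : ∀ k ≤ 2 * n, poch (2 * a - 3) k ≠ 0)
    (ha : a - 1 ≠ 0) :
    ∑ k ∈ range (2 * n + 1),
        poch (-(2 * n : ℂ)) k * poch a k * 2 ^ k / (poch (2 * a - 3) k * (k.factorial : ℂ))
      = poch (1 / 2) n / poch (a - 3 / 2) n * (1 + 4 * n / (a - 1)) := by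
  exact twoF1_aux a ha n h
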